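/- Upward composition of 3-tracks is well defined: let J₁, J₁', J₂, J₂' be good 3-paths in M with J₁(1,·,·) = J₂(0,·,·) and J₁'(1,·,·) = J₂'(0,·,·); if W₁ is a rank-3 homotopy from J₁ to J₁', W₂ is a rank-3 homotopy from J₂ to J₂', and W₁(q,1,·,·) = W₂(q,0,·,·) for all q ∈ ℝ, then J₁*J₂ and J₁'*J₂' are good 3-paths and J₁*J₂ is rank-3 homotopic to J₁'*J₂'. -/

import Mathlib

open scoped Manifold

variable (E : Type*) [NormedAddCommGroup E] [NormedSpace ℝ E] [FiniteDimensional ℝ E]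
variable {M : Type*} [TopologicalSpace M] [ChartedSpace E M]
  [IsManifold 𝓘(ℝ, E) (⊤ : ℕ∞) M]

/-- A 1-path in `M`: a smooth map `ℝ → M` that is constant near `(-∞, 0]` and near
`[1, ∞)` (in the sense of the `ε`-conditions). -/
def IsOnePath (γ : ℝ → M) : Prop :=
  ContMDiff 𝓘(ℝ, ℝ) 𝓘(ℝ, E) (⊤ : ℕ∞) γ ∧
    ∃ ε > (0 : ℝ), (∀ t ≤ ε, γ t = γ 0) ∧ (∀ t, 1 - ε ≤ t → γ t = γ 1)

/-- A 2-path in `M`, as a smooth map `ℝ × ℝ → M` with coordinates `(s, t)`,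
constant near the boundary in each variable, whose images at `t = 0` and `t = 1`
are single points. -/
def IsTwoPath (g : ℝ × ℝ → M) : Prop :=
  ContMDiff 𝓘(ℝ, ℝ × ℝ) 𝓘(ℝ, E) (⊤ : ℕ∞) g ∧
    (∃ ε > (0 : ℝ),
      (∀ s t, s ≤ ε → g (s, t) = g (0, t)) ∧
      (∀ s t, 1 - ε ≤ s → g (s, t) = g (1, t)) ∧
      (∀ s t, t ≤ ε → g (s, t) = g (s, 0)) ∧
      (∀ s t, 1 - ε ≤ t → g (s, t) = g (s, 1))) ∧
    (∀ s s', g (s, 0) = g (s', 0)) ∧ (∀ s s', g (s, 1) = g (s', 1))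

/-- A rank-1 homotopy: a 2-path whose differential has rank at most 1 at every point. -/
def IsRank1Homotopy (h : ℝ × ℝ → M) : Prop :=
  IsTwoPath E h ∧
    ∀ p : ℝ × ℝ,
      Module.finrank ℝ
        (LinearMap.range (mfderiv 𝓘(ℝ, ℝ × ℝ) 𝓘(ℝ, E) h p).toLinearMap) ≤ 1

/-- Two 1-paths are rank-1 homotopic if they are joined by a rank-1 homotopy. -/
def Rank1Homotopic (γ γ' : ℝ → M) : Prop :=
  ∃ h : ℝ × ℝ → M, IsRank1Homotopy E h ∧ (∀ t, h (0, t) = γ t) ∧ (∀ t, h (1, t) = γ' t)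

/-- A 3-path in `M`, as a smooth map `ℝ × ℝ × ℝ → M` with coordinates `(r, s, t)`. -/
def IsThreePath (α : ℝ × ℝ × ℝ → M) : Prop :=
  ContMDiff 𝓘(ℝ, ℝ × ℝ × ℝ) 𝓘(ℝ, E) (⊤ : ℕ∞) α ∧
    (∃ ε > (0 : ℝ),
      (∀ r s t, r ≤ ε → α (r, s, t) = α (0, s, t)) ∧
      (∀ r s t, 1 - ε ≤ r → α (r, s, t) = α (1, s, t)) ∧
      (∀ r s t, s ≤ ε → α (r, s, t) = α (r, 0, t)) ∧
      (∀ r s t, 1 - ε ≤ s → α (r, s, t) = α (r, 1, t)) ∧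
      (∀ r s t, t ≤ ε → α (r, s, t) = α (r, s, 0)) ∧
      (∀ r s t, 1 - ε ≤ t → α (r, s, t) = α (r, s, 1))) ∧
    (∀ r s r' s', α (r, s, 0) = α (r', s', 0)) ∧
    (∀ r s r' s', α (r, s, 1) = α (r', s', 1))

/-- A rank-2 homotopy: a 3-path whose differential has rank at most 2 at every point and
whose restrictions to `s = 0` and `s = 1` are rank-1 homotopies. -/
def IsRank2Homotopy (α : ℝ × ℝ × ℝ → M) : Prop :=
  IsThreePath E α ∧
    (∀ p : ℝ × ℝ × ℝ,
      Module.finrank ℝ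
        (LinearMap.range (mfderiv 𝓘(ℝ, ℝ × ℝ × ℝ) 𝓘(ℝ, E) α p).toLinearMap) ≤ 2) ∧
    IsRank1Homotopy E (fun p : ℝ × ℝ => α (p.1, 0, p.2)) ∧
    IsRank1Homotopy E (fun p : ℝ × ℝ => α (p.1, 1, p.2))

/-- `α` is a rank-2 homotopy from the 2-path `g` to the 2-path `g'`. -/
def Rank2HomotopyFrom (α : ℝ × ℝ × ℝ → M) (g g' : ℝ × ℝ → M) : Prop :=
  IsRank2Homotopy E α ∧ (∀ s t, α (0, s, t) = g (s, t)) ∧ (∀ s t, α (1, s, t) = g' (s, t))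

/-- Two 2-paths are rank-2 homotopic if they are joined by a rank-2 homotopy. -/
def Rank2Homotopic (g g' : ℝ × ℝ → M) : Prop :=
  ∃ α : ℝ × ℝ × ℝ → M, Rank2HomotopyFrom E α g g'

/-- The laminatedness condition for a map `ℝ × ℝ × ℝ → M` with coordinates `(r, s, t)`,
expressed via the partial derivatives (the images of the coordinate vectors under the
differential). -/
def IsLaminated (α : ℝ × ℝ × ℝ → M) : Prop :=
  ∀ r s : ℝ,
    (∀ t : ℝ, ∃ a b : ℝ, (a, b) ≠ (0, 0) ∧
        a • mfderiv 𝓘(ℝ, ℝ × ℝ × ℝ) 𝓘(ℝ, E) α (r, s, t) (1, 0, 0) +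
          b • mfderiv 𝓘(ℝ, ℝ × ℝ × ℝ) 𝓘(ℝ, E) α (r, s, t) (0, 0, 1) = 0) ∨
    (∀ t : ℝ, ∃ a b : ℝ, (a, b) ≠ (0, 0) ∧
        a • mfderiv 𝓘(ℝ, ℝ × ℝ × ℝ) 𝓘(ℝ, E) α (r, s, t) (0, 1, 0) +
          b • mfderiv 𝓘(ℝ, ℝ × ℝ × ℝ) 𝓘(ℝ, E) α (r, s, t) (0, 0, 1) = 0) ∨
    (∃ a b : ℝ, (a, b) ≠ (0, 0) ∧ ∀ t : ℝ,
        a • mfderiv 𝓘(ℝ, ℝ × ℝ × ℝ) 𝓘(ℝ, E) α (r, s, t) (1, 0, 0) +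
          b • mfderiv 𝓘(ℝ, ℝ × ℝ × ℝ) 𝓘(ℝ, E) α (r, s, t) (0, 1, 0) = 0)

/-- A laminated rank-2 homotopy. -/
def IsLaminatedRank2Homotopy (α : ℝ × ℝ × ℝ → M) : Prop :=
  IsRank2Homotopy E α ∧ IsLaminated E α

/-- Two 2-paths are laminated rank-2 homotopic if they are joined by a laminated
rank-2 homotopy. -/
def LamRank2Homotopic (g g' : ℝ × ℝ → M) : Prop :=
  ∃ α : ℝ × ℝ × ℝ → M, IsLaminatedRank2Homotopy E α ∧
    (∀ s t, α (0, s, t) = g (s, t)) ∧ (∀ s t, α (1, s, t) = g' (s, t))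

/-- A good 3-path: a 3-path `J` such that `J (r, 0, t)` and `J (r, 1, t)` do not
depend on `r`. -/
def IsGoodThreePath (J : ℝ × ℝ × ℝ → M) : Prop :=
  IsThreePath E J ∧ (∀ r r' t, J (r, 0, t) = J (r', 0, t)) ∧
    (∀ r r' t, J (r, 1, t) = J (r', 1, t))

/-- A 4-path in `M`, as a smooth map `ℝ × ℝ × ℝ × ℝ → M` with coordinates `(q, r, s, t)`. -/
def IsFourPath (W : ℝ × ℝ × ℝ × ℝ → M) : Prop :=
  ContMDiff 𝓘(ℝ, ℝ × ℝ × ℝ × ℝ) 𝓘(ℝ, E) (⊤ : ℕ∞) W ∧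
    (∃ ε > (0 : ℝ),
      (∀ q r s t, q ≤ ε → W (q, r, s, t) = W (0, r, s, t)) ∧
      (∀ q r s t, 1 - ε ≤ q → W (q, r, s, t) = W (1, r, s, t)) ∧
      (∀ q r s t, r ≤ ε → W (q, r, s, t) = W (q, 0, s, t)) ∧
      (∀ q r s t, 1 - ε ≤ r → W (q, r, s, t) = W (q, 1, s, t)) ∧
      (∀ q r s t, s ≤ ε → W (q, r, s, t) = W (q, r, 0, t)) ∧
      (∀ q r s t, 1 - ε ≤ s → W (q, r, s, t) = W (q, r, 1, t)) ∧
      (∀ q r s t, t ≤ ε → W (q, r, s, t) = W (q, r, s, 0)) ∧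
      (∀ q r s t, 1 - ε ≤ t → W (q, r, s, t) = W (q, r, s, 1))) ∧
    (∀ q r s q' r' s', W (q, r, s, 0) = W (q', r', s', 0)) ∧
    (∀ q r s q' r' s', W (q, r, s, 1) = W (q', r', s', 1))

/-- A rank-3 homotopy: a 4-path whose differential has rank at most 3 at every point,
whose restrictions to `r = 0` and `r = 1` are laminated rank-2 homotopies, and whose
restrictions to `s = 0` and `s = 1` are independent of `r` and are rank-1 homotopies. -/
def IsRank3Homotopy (W : ℝ × ℝ × ℝ × ℝ → M) : Prop :=
  IsFourPath E W ∧
    (∀ p : ℝ × ℝ × ℝ × ℝ,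
      Module.finrank ℝ
        (LinearMap.range (mfderiv 𝓘(ℝ, ℝ × ℝ × ℝ × ℝ) 𝓘(ℝ, E) W p).toLinearMap) ≤ 3) ∧
    IsLaminatedRank2Homotopy E (fun p : ℝ × ℝ × ℝ => W (p.1, 0, p.2.1, p.2.2)) ∧
    IsLaminatedRank2Homotopy E (fun p : ℝ × ℝ × ℝ => W (p.1, 1, p.2.1, p.2.2)) ∧
    (∀ q r r' t, W (q, r, 0, t) = W (q, r', 0, t)) ∧
    (∀ q r r' t, W (q, r, 1, t) = W (q, r', 1, t)) ∧
    IsRank1Homotopy E (fun p : ℝ × ℝ => W (p.1, 0, 0, p.2)) ∧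
    IsRank1Homotopy E (fun p : ℝ × ℝ => W (p.1, 0, 1, p.2))

/-- `W` is a rank-3 homotopy from the good 3-path `J` to the good 3-path `J'`. -/
def Rank3HomotopyFrom (W : ℝ × ℝ × ℝ × ℝ → M) (J J' : ℝ × ℝ × ℝ → M) : Prop :=
  IsRank3Homotopy E W ∧ (∀ r s t, W (0, r, s, t) = J (r, s, t)) ∧
    (∀ r s t, W (1, r, s, t) = J' (r, s, t))

/-- Two good 3-paths are rank-3 homotopic if they are joined by a rank-3 homotopy. -/
def Rank3Homotopic (J J' : ℝ × ℝ × ℝ → M) : Prop :=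
  ∃ W : ℝ × ℝ × ℝ × ℝ → M, Rank3HomotopyFrom E W J J'

/-- Upward composition of 3-paths. -/
noncomputable def upComp (J K : ℝ × ℝ × ℝ → M) : ℝ × ℝ × ℝ → M := fun p =>
  if p.1 ≤ 1 / 2 then J (2 * p.1, p.2.1, p.2.2) else K (2 * p.1 - 1, p.2.1, p.2.2)


section AuxLemmas

variable {E}

private lemma aux_comp {W V : ℝ × ℝ × ℝ × ℝ → M} {φ : ℝ × ℝ × ℝ × ℝ → ℝ × ℝ × ℝ × ℝ}
    (hV : ContMDiff 𝓘(ℝ, ℝ × ℝ × ℝ × ℝ) 𝓘(ℝ, E) (⊤ : ℕ∞) V)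
    (hrank : ∀ p, Module.finrank ℝ
      (LinearMap.range (mfderiv 𝓘(ℝ, ℝ × ℝ × ℝ × ℝ) 𝓘(ℝ, E) V p).toLinearMap) ≤ 3)
    (hφ : ContMDiff 𝓘(ℝ, ℝ × ℝ × ℝ × ℝ) 𝓘(ℝ, ℝ × ℝ × ℝ × ℝ) (⊤ : ℕ∞) φ) {p : ℝ × ℝ × ℝ × ℝ}
    (heq : W =ᶠ[nhds p] (V ∘ φ)) :
    ContMDiffAt 𝓘(ℝ, ℝ × ℝ × ℝ × ℝ) 𝓘(ℝ, E) (⊤ : ℕ∞) W p ∧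
    Module.finrank ℝ
      (LinearMap.range (mfderiv 𝓘(ℝ, ℝ × ℝ × ℝ × ℝ) 𝓘(ℝ, E) W p).toLinearMap) ≤ 3 := by
  have h1 : ContMDiffAt 𝓘(ℝ, ℝ × ℝ × ℝ × ℝ) 𝓘(ℝ, E) (⊤ : ℕ∞) (V ∘ φ) p :=
    (hV.comp hφ).contMDiffAt
  refine ⟨h1.congr_of_eventuallyEq heq, ?_⟩
  haveI : FiniteDimensional ℝ (TangentSpace 𝓘(ℝ, E) (V (φ p))) := ‹FiniteDimensional ℝ E›
  haveI : FiniteDimensional ℝ (TangentSpace 𝓘(ℝ, E) ((V ∘ φ) p)) := ‹FiniteDimensional ℝ E›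
  haveI : FiniteDimensional ℝ (TangentSpace 𝓘(ℝ, E) (W p)) := ‹FiniteDimensional ℝ E›
  rw [heq.mfderiv_eq, mfderiv_comp p (hV.mdifferentiableAt (by simp)) (hφ.mdifferentiableAt (by simp))]
  have hle : LinearMap.range ((mfderiv 𝓘(ℝ, ℝ × ℝ × ℝ × ℝ) 𝓘(ℝ, E) V (φ p)).comp
      (mfderiv 𝓘(ℝ, ℝ × ℝ × ℝ × ℝ) 𝓘(ℝ, ℝ × ℝ × ℝ × ℝ) φ p)).toLinearMap ≤
      LinearMap.range (mfderiv 𝓘(ℝ, ℝ × ℝ × ℝ × ℝ) 𝓘(ℝ, E) V (φ p)).toLinearMap := by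
    rw [ContinuousLinearMap.toLinearMap_comp]
    exact LinearMap.range_comp_le_range _ _
  haveI : FiniteDimensional ℝ (LinearMap.range (mfderiv 𝓘(ℝ, ℝ × ℝ × ℝ × ℝ) 𝓘(ℝ, E) V (φ p)).toLinearMap) :=
    FiniteDimensional.finiteDimensional_submodule _
  exact le_trans (Submodule.finrank_mono (t := LinearMap.range (mfderiv 𝓘(ℝ, ℝ × ℝ × ℝ × ℝ) 𝓘(ℝ, E) V (φ p)).toLinearMap) hle) (hrank (φ p))

variable (E)

private lemma isGoodThreePath_of_slice {W : ℝ × ℝ × ℝ × ℝ → M} {J : ℝ × ℝ × ℝ → M}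
    (hW : IsRank3Homotopy E W) (q₀ : ℝ) (hJ : ∀ r s t, W (q₀, r, s, t) = J (r, s, t)) :
    IsGoodThreePath E J := by
  obtain ⟨⟨hsm, ⟨ε, hε, _, _, cr0, cr1, cs0, cs1, ct0, ct1⟩, e0, e1⟩, _, _, _, ind0, ind1,
    _, _⟩ := hW
  have hJeq : J = fun p : ℝ × ℝ × ℝ => W (q₀, p.1, p.2.1, p.2.2) :=
    funext fun p => (hJ p.1 p.2.1 p.2.2).symm
  refine ⟨⟨?_, ⟨ε, hε, ?_, ?_, ?_, ?_, ?_, ?_⟩, ?_, ?_⟩, ?_, ?_⟩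
  · rw [hJeq]
    exact hsm.comp (contMDiff_iff_contDiff.mpr (by fun_prop :
      ContDiff ℝ _ (fun p : ℝ × ℝ × ℝ => ((q₀, p) : ℝ × ℝ × ℝ × ℝ))))
  · intro r s t h; rw [← hJ, ← hJ]; exact cr0 q₀ r s t h
  · intro r s t h; rw [← hJ, ← hJ]; exact cr1 q₀ r s t h
  · intro r s t h; rw [← hJ, ← hJ]; exact cs0 q₀ r s t h
  · intro r s t h; rw [← hJ, ← hJ]; exact cs1 q₀ r s t h
  · intro r s t h; rw [← hJ, ← hJ]; exact ct0 q₀ r s t h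
  · intro r s t h; rw [← hJ, ← hJ]; exact ct1 q₀ r s t h
  · intro r s r' s'; rw [← hJ, ← hJ]; exact e0 q₀ r s q₀ r' s'
  · intro r s r' s'; rw [← hJ, ← hJ]; exact e1 q₀ r s q₀ r' s'
  · intro r r' t; rw [← hJ, ← hJ]; exact ind0 q₀ r r' t
  · intro r r' t; rw [← hJ, ← hJ]; exact ind1 q₀ r r' t

end AuxLemmas

/-- Upward composition of 3-tracks is well defined. -/
theorem upComp_rank3Homotopic (J₁ J₁' J₂ J₂' : ℝ × ℝ × ℝ → M) (W₁ W₂ : ℝ × ℝ × ℝ × ℝ → M)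
    (hJ₁ : IsGoodThreePath E J₁) (hJ₁' : IsGoodThreePath E J₁')
    (hJ₂ : IsGoodThreePath E J₂) (hJ₂' : IsGoodThreePath E J₂')
    (h12 : ∀ s t, J₁ (1, s, t) = J₂ (0, s, t))
    (h12' : ∀ s t, J₁' (1, s, t) = J₂' (0, s, t))
    (hW₁ : Rank3HomotopyFrom E W₁ J₁ J₁') (hW₂ : Rank3HomotopyFrom E W₂ J₂ J₂')
    (hW : ∀ q s t, W₁ (q, 1, s, t) = W₂ (q, 0, s, t)) :
    IsGoodThreePath E (upComp J₁ J₂) ∧ IsGoodThreePath E (upComp J₁' J₂') ∧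
      Rank3Homotopic E (upComp J₁ J₂) (upComp J₁' J₂') := by
  classical
  obtain ⟨⟨⟨hs₁, ⟨ε₁, hε₁, c₁q0, c₁q1, c₁r0, c₁r1, c₁s0, c₁s1, c₁t0, c₁t1⟩, e₁0, e₁1⟩,
    rk₁, lam₁0, lam₁1, ind₁0, ind₁1, rh₁0, rh₁1⟩, B₁0, B₁1⟩ := hW₁
  obtain ⟨⟨⟨hs₂, ⟨ε₂, hε₂, c₂q0, c₂q1, c₂r0, c₂r1, c₂s0, c₂s1, c₂t0, c₂t1⟩, e₂0, e₂1⟩,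
    rk₂, lam₂0, lam₂1, ind₂0, ind₂1, rh₂0, rh₂1⟩, B₂0, B₂1⟩ := hW₂
  set Wc : ℝ × ℝ × ℝ × ℝ → M := fun p =>
    if p.2.1 ≤ 1 / 2 then W₁ (p.1, 2 * p.2.1, p.2.2) else W₂ (p.1, 2 * p.2.1 - 1, p.2.2)
    with hWdef
  have Wle : ∀ q r s t : ℝ, r ≤ 1 / 2 → Wc (q, r, s, t) = W₁ (q, 2 * r, s, t) := by
    intro q r s t h; rw [hWdef]; exact if_pos h
  have Wgt : ∀ q r s t : ℝ, ¬ r ≤ 1 / 2 → Wc (q, r, s, t) = W₂ (q, 2 * r - 1, s, t) := by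
    intro q r s t h; rw [hWdef]; exact if_neg h
  have h20 : (2 : ℝ) * 0 = 0 := by norm_num
  have h21 : (2 : ℝ) * 1 - 1 = 1 := by norm_num
  have hnhalf : ¬ (1 : ℝ) ≤ 1 / 2 := by norm_num
  have hcont : Continuous (fun x : ℝ × ℝ × ℝ × ℝ => x.2.1) := continuous_snd.fst
  -- local structure: smoothness and rank bound
  have hloc : ∀ p : ℝ × ℝ × ℝ × ℝ,
      ContMDiffAt 𝓘(ℝ, ℝ × ℝ × ℝ × ℝ) 𝓘(ℝ, E) (⊤ : ℕ∞) Wc p ∧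
      Module.finrank ℝ
        (LinearMap.range (mfderiv 𝓘(ℝ, ℝ × ℝ × ℝ × ℝ) 𝓘(ℝ, E) Wc p).toLinearMap) ≤ 3 := by
    intro p
    rcases lt_trichotomy p.2.1 (1 / 2) with h | h | h
    · refine aux_comp hs₁ rk₁
        (contMDiff_iff_contDiff.mpr (by fun_prop :
          ContDiff ℝ _ (fun x : ℝ × ℝ × ℝ × ℝ => ((x.1, 2 * x.2.1, x.2.2) : ℝ × ℝ × ℝ × ℝ)))) ?_
      have hmem : (fun x : ℝ × ℝ × ℝ × ℝ => x.2.1) ⁻¹' Set.Iio (1 / 2) ∈ nhds p :=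
        ((isOpen_Iio).preimage hcont).mem_nhds h
      filter_upwards [hmem] with x hx
      exact Wle x.1 x.2.1 x.2.2.1 x.2.2.2 (le_of_lt hx)
    · refine aux_comp hs₁ rk₁
        (contMDiff_iff_contDiff.mpr (by fun_prop :
          ContDiff ℝ _ (fun x : ℝ × ℝ × ℝ × ℝ => ((x.1, 1, x.2.2) : ℝ × ℝ × ℝ × ℝ)))) ?_
      set δ : ℝ := min ε₁ ε₂ / 2 with hδdef
      have hδ : 0 < δ := by
        have := lt_min hε₁ hε₂
        rw [hδdef]; linarith
      have hδ1 : δ ≤ ε₁ / 2 := by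
        have := min_le_left ε₁ ε₂; rw [hδdef]; linarith
      have hδ2 : δ ≤ ε₂ / 2 := by
        have := min_le_right ε₁ ε₂; rw [hδdef]; linarith
      have hmem : (fun x : ℝ × ℝ × ℝ × ℝ => x.2.1) ⁻¹' Set.Ioo (1 / 2 - δ) (1 / 2 + δ)
          ∈ nhds p := by
        refine ((isOpen_Ioo).preimage hcont).mem_nhds ?_
        simp only [Set.mem_preimage, Set.mem_Ioo, h]
        constructor <;> linarith
      filter_upwards [hmem] with x hx
      obtain ⟨hx1, hx2⟩ := hx
      by_cases hx3 : x.2.1 ≤ 1 / 2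
      · rw [Wle x.1 x.2.1 x.2.2.1 x.2.2.2 hx3]
        exact c₁r1 x.1 (2 * x.2.1) x.2.2.1 x.2.2.2 (by linarith)
      · rw [Wgt x.1 x.2.1 x.2.2.1 x.2.2.2 hx3]
        exact (c₂r0 x.1 (2 * x.2.1 - 1) x.2.2.1 x.2.2.2 (by linarith)).trans
          (hW x.1 x.2.2.1 x.2.2.2).symm
    · refine aux_comp hs₂ rk₂
        (contMDiff_iff_contDiff.mpr (by fun_prop :
          ContDiff ℝ _
            (fun x : ℝ × ℝ × ℝ × ℝ => ((x.1, 2 * x.2.1 - 1, x.2.2) : ℝ × ℝ × ℝ × ℝ)))) ?_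
      have hmem : (fun x : ℝ × ℝ × ℝ × ℝ => x.2.1) ⁻¹' Set.Ioi (1 / 2) ∈ nhds p :=
        ((isOpen_Ioi).preimage hcont).mem_nhds h
      filter_upwards [hmem] with x hx
      exact Wgt x.1 x.2.1 x.2.2.1 x.2.2.2 (not_le.mpr hx)
  have hsmooth : ContMDiff 𝓘(ℝ, ℝ × ℝ × ℝ × ℝ) 𝓘(ℝ, E) (⊤ : ℕ∞) Wc := fun p => (hloc p).1
  have hrank := fun p => (hloc p).2
  -- boundary behaviour at t = 0 and t = 1
  have hT0 : ∀ q r s : ℝ, Wc (q, r, s, 0) = W₁ (0, 0, 0, 0) := by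
    intro q r s
    by_cases h : r ≤ 1 / 2
    · rw [Wle q r s 0 h]; exact e₁0 q (2 * r) s 0 0 0
    · rw [Wgt q r s 0 h]
      exact (e₂0 q (2 * r - 1) s 0 0 0).trans
        ((hW 0 0 0).symm.trans (e₁0 0 1 0 0 0 0))
  have hT1 : ∀ q r s : ℝ, Wc (q, r, s, 1) = W₁ (0, 0, 0, 1) := by
    intro q r s
    by_cases h : r ≤ 1 / 2
    · rw [Wle q r s 1 h]; exact e₁1 q (2 * r) s 0 0 0
    · rw [Wgt q r s 1 h]
      exact (e₂1 q (2 * r - 1) s 0 0 0).trans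
        ((hW 0 0 1).symm.trans (e₁1 0 1 0 0 0 0))
  -- the ε for the composed homotopy
  set ε : ℝ := min (min ε₁ ε₂) (1 / 2) / 2 with hεdef
  have hεmin1 : ε ≤ ε₁ / 2 := by
    have h1 := min_le_left (min ε₁ ε₂) (1 / 2)
    have h2 := min_le_left ε₁ ε₂
    rw [hεdef]; linarith
  have hεmin2 : ε ≤ ε₂ / 2 := by
    have h1 := min_le_left (min ε₁ ε₂) (1 / 2)
    have h2 := min_le_right ε₁ ε₂
    rw [hεdef]; linarith
  have hεq : ε ≤ 1 / 4 := by
    have h1 := min_le_right (min ε₁ ε₂) (1 / 2)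
    rw [hεdef]; linarith
  have hεpos : 0 < ε := by
    have h1 := lt_min (lt_min hε₁ hε₂) (by norm_num : (0:ℝ) < 1 / 2)
    rw [hεdef]; linarith
  have hε1 : ε ≤ ε₁ := by linarith
  have hε2 : ε ≤ ε₂ := by linarith
  -- the composed homotopy is a rank-3 homotopy
  have R3 : IsRank3Homotopy E Wc := by
    refine ⟨⟨hsmooth, ⟨ε, hεpos, ?_, ?_, ?_, ?_, ?_, ?_, ?_, ?_⟩, ?_, ?_⟩, hrank, ?_, ?_,
      ?_, ?_, ?_, ?_⟩
    · -- q ≤ ε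
      intro q r s t h
      by_cases hr : r ≤ 1 / 2
      · rw [Wle q r s t hr, Wle 0 r s t hr]; exact c₁q0 q (2 * r) s t (by linarith)
      · rw [Wgt q r s t hr, Wgt 0 r s t hr]; exact c₂q0 q (2 * r - 1) s t (by linarith)
    · -- 1 - ε ≤ q
      intro q r s t h
      by_cases hr : r ≤ 1 / 2
      · rw [Wle q r s t hr, Wle 1 r s t hr]; exact c₁q1 q (2 * r) s t (by linarith)
      · rw [Wgt q r s t hr, Wgt 1 r s t hr]; exact c₂q1 q (2 * r - 1) s t (by linarith)
    · -- r ≤ ε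
      intro q r s t h
      have hr : r ≤ 1 / 2 := by linarith
      rw [Wle q r s t hr, Wle q 0 s t (by norm_num), h20]
      exact c₁r0 q (2 * r) s t (by linarith)
    · -- 1 - ε ≤ r
      intro q r s t h
      have hr : ¬ r ≤ 1 / 2 := by push_neg; linarith
      rw [Wgt q r s t hr, Wgt q 1 s t hnhalf, h21]
      exact c₂r1 q (2 * r - 1) s t (by linarith)
    · -- s ≤ ε
      intro q r s t h
      by_cases hr : r ≤ 1 / 2
      · rw [Wle q r s t hr, Wle q r 0 t hr]; exact c₁s0 q (2 * r) s t (by linarith)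
      · rw [Wgt q r s t hr, Wgt q r 0 t hr]; exact c₂s0 q (2 * r - 1) s t (by linarith)
    · -- 1 - ε ≤ s
      intro q r s t h
      by_cases hr : r ≤ 1 / 2
      · rw [Wle q r s t hr, Wle q r 1 t hr]; exact c₁s1 q (2 * r) s t (by linarith)
      · rw [Wgt q r s t hr, Wgt q r 1 t hr]; exact c₂s1 q (2 * r - 1) s t (by linarith)
    · -- t ≤ ε
      intro q r s t h
      by_cases hr : r ≤ 1 / 2
      · rw [Wle q r s t hr, Wle q r s 0 hr]; exact c₁t0 q (2 * r) s t (by linarith)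
      · rw [Wgt q r s t hr, Wgt q r s 0 hr]; exact c₂t0 q (2 * r - 1) s t (by linarith)
    · -- 1 - ε ≤ t
      intro q r s t h
      by_cases hr : r ≤ 1 / 2
      · rw [Wle q r s t hr, Wle q r s 1 hr]; exact c₁t1 q (2 * r) s t (by linarith)
      · rw [Wgt q r s t hr, Wgt q r s 1 hr]; exact c₂t1 q (2 * r - 1) s t (by linarith)
    · intro q r s q' r' s'; rw [hT0 q r s, hT0 q' r' s']
    · intro q r s q' r' s'; rw [hT1 q r s, hT1 q' r' s']
    · -- laminated slice at r = 0
      have hsl : (fun p : ℝ × ℝ × ℝ => Wc (p.1, 0, p.2.1, p.2.2)) =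
          fun p : ℝ × ℝ × ℝ => W₁ (p.1, 0, p.2.1, p.2.2) := by
        funext p
        rw [Wle p.1 0 p.2.1 p.2.2 (by norm_num), h20]
      rw [hsl]; exact lam₁0
    · -- laminated slice at r = 1
      have hsl : (fun p : ℝ × ℝ × ℝ => Wc (p.1, 1, p.2.1, p.2.2)) =
          fun p : ℝ × ℝ × ℝ => W₂ (p.1, 1, p.2.1, p.2.2) := by
        funext p
        rw [Wgt p.1 1 p.2.1 p.2.2 hnhalf, h21]
      rw [hsl]; exact lam₂1
    · -- s = 0 independence of r
      have key : ∀ q r t : ℝ, Wc (q, r, 0, t) = W₁ (q, 0, 0, t) := by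
        intro q r t
        by_cases h : r ≤ 1 / 2
        · rw [Wle q r 0 t h]; exact ind₁0 q (2 * r) 0 t
        · rw [Wgt q r 0 t h]
          exact (ind₂0 q (2 * r - 1) 0 t).trans
            ((hW q 0 t).symm.trans (ind₁0 q 1 0 t))
      intro q r r' t; rw [key q r t, key q r' t]
    · -- s = 1 independence of r
      have key : ∀ q r t : ℝ, Wc (q, r, 1, t) = W₁ (q, 0, 1, t) := by
        intro q r t
        by_cases h : r ≤ 1 / 2
        · rw [Wle q r 1 t h]; exact ind₁1 q (2 * r) 0 t
        · rw [Wgt q r 1 t h]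
          exact (ind₂1 q (2 * r - 1) 0 t).trans
            ((hW q 1 t).symm.trans (ind₁1 q 1 0 t))
      intro q r r' t; rw [key q r t, key q r' t]
    · -- rank-1 homotopy at (r, s) = (0, 0)
      have hsl : (fun p : ℝ × ℝ => Wc (p.1, 0, 0, p.2)) =
          fun p : ℝ × ℝ => W₁ (p.1, 0, 0, p.2) := by
        funext p
        rw [Wle p.1 0 0 p.2 (by norm_num), h20]
      rw [hsl]; exact rh₁0
    · -- rank-1 homotopy at (r, s) = (0, 1)
      have hsl : (fun p : ℝ × ℝ => Wc (p.1, 0, 1, p.2)) =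
          fun p : ℝ × ℝ => W₁ (p.1, 0, 1, p.2) := by
        funext p
        rw [Wle p.1 0 1 p.2 (by norm_num), h20]
      rw [hsl]; exact rh₁1
  -- endpoints
  have hend0 : ∀ r s t : ℝ, Wc (0, r, s, t) = upComp J₁ J₂ (r, s, t) := by
    intro r s t
    by_cases h : r ≤ 1 / 2
    · rw [Wle 0 r s t h]
      simp only [upComp]
      rw [if_pos h]
      exact B₁0 (2 * r) s t
    · rw [Wgt 0 r s t h]
      simp only [upComp]
      rw [if_neg h]
      exact B₂0 (2 * r - 1) s t
  have hend1 : ∀ r s t : ℝ, Wc (1, r, s, t) = upComp J₁' J₂' (r, s, t) := by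
    intro r s t
    by_cases h : r ≤ 1 / 2
    · rw [Wle 1 r s t h]
      simp only [upComp]
      rw [if_pos h]
      exact B₁1 (2 * r) s t
    · rw [Wgt 1 r s t h]
      simp only [upComp]
      rw [if_neg h]
      exact B₂1 (2 * r - 1) s t
  exact ⟨isGoodThreePath_of_slice E R3 0 hend0, isGoodThreePath_of_slice E R3 1 hend1,
    ⟨Wc, R3, hend0, hend1⟩⟩
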